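/- Adjusted nominal assortativity does not satisfy minimal agreement: with m = 3 classes of equal sizes (f_i = 1/3 for all i), there exist two fully heterophilic 3×3 normalized class adjacency matrices C and C′ (i.e., with ∑_i c_ii = 0 and ∑_i c′_ii = 0) such that AC_adj(C) ≠ AC_adj(C′). (For example, take C with c_12 = c_21 = 1/2 and all other entries 0, and C′ with all six off-diagonal entries equal to 1/6.) -/
import Mathlib


/-- A normalized class adjacency matrix: symmetric, nonnegative entries, entries sum to 1. -/
def IsNCAM3 (C : Matrix (Fin 3) (Fin 3) ℝ) : Prop :=
  (∀ i j, C i j = C j i) ∧ (∀ i j, 0 ≤ C i j) ∧ (∑ i : Fin 3, ∑ j : Fin 3, C i j = 1)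

/-- Adjusted nominal assortativity for m = 3 equal-size classes (f_i = 1/3). -/
noncomputable def ACadj3 (C : Matrix (Fin 3) (Fin 3) ℝ) : ℝ :=
  ((∑ i : Fin 3, (9 : ℝ) * C i i) - ∑ i : Fin 3, ((9 : ℝ) * ∑ k : Fin 3, C i k) ^ 2) /
    (1 - ∑ i : Fin 3, ((9 : ℝ) * ∑ k : Fin 3, C i k) ^ 2)

/-- adjusted nominal assortativity does not satisfy minimal agreement. -/
theorem adjusted_nominal_assortativity_no_minimal_agreement :
    ∃ C C' : Matrix (Fin 3) (Fin 3) ℝ,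
      IsNCAM3 C ∧ IsNCAM3 C' ∧
      (∑ i : Fin 3, C i i = 0) ∧ (∑ i : Fin 3, C' i i = 0) ∧
      (1 - ∑ i : Fin 3, ((9 : ℝ) * ∑ k : Fin 3, C i k) ^ 2) ≠ 0 ∧
      (1 - ∑ i : Fin 3, ((9 : ℝ) * ∑ k : Fin 3, C' i k) ^ 2) ≠ 0 ∧
      ACadj3 C ≠ ACadj3 C' := by
  refine ⟨!![0,1/2,0;1/2,0,0;0,0,0], !![0,1/6,1/6;1/6,0,1/6;1/6,1/6,0], ?_, ?_, ?_, ?_, ?_, ?_, ?_⟩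
  · refine ⟨?_, ?_, ?_⟩
    · intro i j; fin_cases i <;> fin_cases j <;> norm_num
    · intro i j; fin_cases i <;> fin_cases j <;> norm_num
    · simp [Fin.sum_univ_three, Matrix.vecHead, Matrix.vecTail]; norm_num
  · refine ⟨?_, ?_, ?_⟩
    · intro i j; fin_cases i <;> fin_cases j <;> norm_num
    · intro i j; fin_cases i <;> fin_cases j <;> norm_num
    · simp [Fin.sum_univ_three, Matrix.vecHead, Matrix.vecTail]; norm_num
  · simp [Fin.sum_univ_three, Matrix.vecHead, Matrix.vecTail]
  · simp [Fin.sum_univ_three, Matrix.vecHead, Matrix.vecTail]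
  · simp [Fin.sum_univ_three, Matrix.vecHead, Matrix.vecTail]; norm_num
  · simp [Fin.sum_univ_three, Matrix.vecHead, Matrix.vecTail]; norm_num
  · unfold ACadj3
    simp [Fin.sum_univ_three, Matrix.vecHead, Matrix.vecTail]
    norm_num
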